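/- Let s, t be integers with 1 ≤ s, t ≤ q−1 and s ≠ t, assume gcd(2k, q) = 1, (q−1)/k does not divide s−t, and v₂(s−t) ≠ v₂(q−1) − v₂(k) − 1, and let β = (γ^s·α_1, …, γ^s·α_k, γ^t·α_1, …, γ^t·α_k) ∈ F_q^{2k} (so n = 2k; its entries are pairwise distinct). If 2ℓ < k, or if k = 2ℓ and (k : F_q)·(γ^{sk} + γ^{tk}) + Σ_{i=1}^{ℓ} a_{1i}² ≠ 0 in F_q, then the GRL code GRL_k(β, A) is Euclidean LCD. -/
import Mathlib


open Matrix BigOperators Finset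

/-- Euclidean dual of a code `C ⊆ F^ι`. -/
def dualE {F : Type} [Field F] {ι : Type} [Fintype ι] (C : Submodule F (ι → F)) :
    Submodule F (ι → F) where
  carrier := {x | ∀ y ∈ C, ∑ i, x i * y i = 0}
  add_mem' := by
    intro a b ha hb y hy
    have h : ∑ i, (a + b) i * y i = (∑ i, a i * y i) + ∑ i, b i * y i := by
      rw [← Finset.sum_add_distrib]
      exact Finset.sum_congr rfl fun i _ => add_mul _ _ _
    rw [h, ha y hy, hb y hy, add_zero]
  zero_mem' := by intro y hy; simp
  smul_mem' := by
    intro c a ha y hy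
    have h : ∑ i, (c • a) i * y i = c * ∑ i, a i * y i := by
      rw [Finset.mul_sum]
      exact Finset.sum_congr rfl fun i _ => by
        simp [Pi.smul_apply, smul_eq_mul, mul_assoc]
    rw [h, ha y hy, mul_zero]

/-- Generator matrix of the generalized Roth–Lempel code: evaluation columns indexed by `ι`
(entry `β j ^ r`), extra columns indexed by `Fin ℓ` (zero for rows `r < k - ℓ`, and the
corresponding row of `A` for rows `k - ℓ ≤ r ≤ k - 1`). -/
def GRLmatrix {F : Type} [Field F] (k ℓ : ℕ) (hℓk : ℓ ≤ k) {ι : Type} (β : ι → F)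
    (A : Matrix (Fin ℓ) (Fin ℓ) F) : Matrix (Fin k) (ι ⊕ Fin ℓ) F :=
  fun r => Sum.elim (fun j => β j ^ (r : ℕ))
    (fun j' => if _h : (r : ℕ) < k - ℓ then 0
      else A ⟨(r : ℕ) - (k - ℓ), by have := r.isLt; omega⟩ j')

/-- The generalized Roth–Lempel code: the row span of `GRLmatrix`. -/
def GRLcode {F : Type} [Field F] (k ℓ : ℕ) (hℓk : ℓ ≤ k) {ι : Type} (β : ι → F)
    (A : Matrix (Fin ℓ) (Fin ℓ) F) : Submodule F ((ι ⊕ Fin ℓ) → F) :=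
  Submodule.span F (Set.range (GRLmatrix k ℓ hℓk β A))


lemma gram_crit {F : Type} [Field F] {ι κ : Type} [Fintype ι] [Fintype κ]
    (G : Matrix κ ι F)
    (h : ∀ c : κ → F, (∀ r' : κ, ∑ r, c r * (∑ j, G r j * G r' j) = 0) → c = 0) :
    Submodule.span F (Set.range G) ⊓ dualE (Submodule.span F (Set.range G)) = ⊥ := by
  rw [eq_bot_iff]
  rintro x ⟨hx1, hx2⟩
  obtain ⟨c, rfl⟩ := (Submodule.mem_span_range_iff_exists_fun F).mp hx1
  have hc : c = 0 := by
    apply h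
    intro r'
    have hy : G r' ∈ Submodule.span F (Set.range G) :=
      Submodule.subset_span (Set.mem_range_self r')
    have h2 := hx2 (G r') hy
    rw [← h2]
    simp_rw [Finset.mul_sum]
    rw [Finset.sum_comm]
    apply Finset.sum_congr rfl
    intro j _
    rw [Finset.sum_apply, Finset.sum_mul]
    apply Finset.sum_congr rfl
    intro r _
    simp [mul_assoc]
  rw [hc]
  simp

lemma key_v2 {F : Type} [Field F] (γ : Fˣ) (N N' k s t : ℕ)
    (hord : orderOf γ = N) (hN : N = 2 * N') (hN0 : 0 < N') (hk0 : 0 < k)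
    (hst : s ≠ t)
    (hsum : (γ : F) ^ (s * k) + (γ : F) ^ (t * k) = 0) :
    (padicValNat 2 ((s : ℤ) - (t : ℤ)).natAbs : ℤ) =
      (padicValNat 2 N : ℤ) - (padicValNat 2 k : ℤ) - 1 := by
  have hNpos : 0 < N := by omega
  -- γ^(s*k) = -γ^(t*k) in units
  have hu : (γ : Fˣ) ^ (s * k) = -(γ ^ (t * k)) := by
    apply Units.ext
    rw [Units.val_neg, Units.val_pow_eq_pow_val, Units.val_pow_eq_pow_val]
    linear_combination hsum
  -- γ ^ N' = -1
  have hneg : (γ : Fˣ) ^ N' = -1 := by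
    have h2 : ((γ : Fˣ) ^ N' : F) * ((γ : Fˣ) ^ N' : F) = 1 := by
      have : (γ : Fˣ) ^ N' * γ ^ N' = 1 := by
        rw [← pow_add]
        have : N' + N' = N := by omega
        rw [this, ← hord, pow_orderOf_eq_one]
      calc ((γ : Fˣ) ^ N' : F) * ((γ : Fˣ) ^ N' : F) = (((γ ^ N' * γ ^ N' : Fˣ)) : F) := by
            push_cast; ring
        _ = 1 := by rw [this, Units.val_one]
    rcases mul_self_eq_one_iff.mp h2 with h | h
    · exfalso
      have h1 : (γ : Fˣ) ^ N' = 1 := Units.ext (by simpa using h)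
      have := orderOf_dvd_of_pow_eq_one h1
      rw [hord] at this
      have := Nat.le_of_dvd hN0 this
      omega
    · exact Units.ext (by simpa using h)
  -- γ ^ ((s-t)*k - N') = 1
  have hz : (γ : Fˣ) ^ (((s : ℤ) - t) * k - (N' : ℤ)) = 1 := by
    rw [sub_mul, sub_sub, _root_.zpow_sub]
    have h1 : (γ : Fˣ) ^ ((s : ℤ) * k) = γ ^ (s * k) := by
      rw [← _root_.zpow_natCast]; norm_num
    have h2 : (γ : Fˣ) ^ ((t : ℤ) * k + N') = γ ^ (t * k) * γ ^ N' := by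
      rw [_root_.zpow_add, ← _root_.zpow_natCast γ (t*k), ← _root_.zpow_natCast γ N']; norm_num
    rw [h1, h2, hu, hneg]
    rw [mul_neg_one]
    exact mul_inv_cancel _
  have hdvd2 : ((N : ℤ)) ∣ ((s : ℤ) - t) * k - (N' : ℤ) := by
    rw [← hord]
    exact orderOf_dvd_iff_zpow_eq_one.mpr hz
  obtain ⟨j, hj⟩ := hdvd2
  have keyZ : ((s : ℤ) - t) * k = (N' : ℤ) * (2 * j + 1) := by
    have hNZ : (N : ℤ) = 2 * N' := by exact_mod_cast hN
    rw [hNZ] at hj; linarith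
  -- pass to natAbs
  have habs : ((s : ℤ) - t).natAbs * k = N' * (2 * j + 1).natAbs := by
    have := congrArg Int.natAbs keyZ
    rwa [Int.natAbs_mul, Int.natAbs_mul, Int.natAbs_natCast, Int.natAbs_natCast] at this
  set dn := ((s : ℤ) - t).natAbs with hdn
  have hdn0 : dn ≠ 0 := by
    simp [hdn, Int.natAbs_eq_zero, sub_eq_zero]
    exact_mod_cast hst
  have hodd : ¬ (2 ∣ (2 * j + 1).natAbs) := by
    rw [← Int.natAbs_natCast 2, Int.natAbs_dvd_natAbs]
    omega
  have hodd0 : (2 * j + 1).natAbs ≠ 0 := by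
    simp [Int.natAbs_eq_zero]; omega
  haveI : Fact (Nat.Prime 2) := ⟨Nat.prime_two⟩
  have hv1 : padicValNat 2 (dn * k) = padicValNat 2 dn + padicValNat 2 k :=
    padicValNat.mul hdn0 hk0.ne'
  have hv2' : padicValNat 2 (N' * (2 * j + 1).natAbs) = padicValNat 2 N' := by
    rw [padicValNat.mul hN0.ne' hodd0, padicValNat.eq_zero_of_not_dvd hodd, add_zero]
  have hvN : padicValNat 2 N = 1 + padicValNat 2 N' := by
    rw [hN, padicValNat.mul (by norm_num) hN0.ne']
    congr 1
    exact padicValNat.self (by norm_num)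
  have : padicValNat 2 dn + padicValNat 2 k = padicValNat 2 N' := by
    rw [← hv1, ← hv2', habs]
  omega

lemma geom_fin {F : Type} [Field F] (z : F) (k : ℕ) (hz : z ≠ 1) (hzk : z ^ k = 1) :
    ∑ i : Fin k, z ^ ((i : ℕ) + 1) = 0 := by
  have h := geom_sum_eq hz k
  rw [hzk, sub_self, zero_div] at h
  calc ∑ i : Fin k, z ^ ((i : ℕ) + 1) = ∑ i ∈ range k, z ^ (i + 1) :=
        Fin.sum_univ_eq_sum_range (fun i => z ^ (i + 1)) k
    _ = z * ∑ i ∈ range k, z ^ i := by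
        rw [mul_sum]; exact sum_congr rfl fun i _ => by rw [pow_succ]; ring
    _ = 0 := by rw [h, mul_zero]

lemma alphasum {F : Type} [Field F] (γ : Fˣ) (N k : ℕ) (hord : orderOf γ = N)
    (hk0 : 0 < k) (hN0 : 0 < N) (hkdvd : k ∣ N) (α : Fin k → F)
    (hα : ∀ i : Fin k, α i = (γ : F) ^ (N / k * ((i : ℕ) + 1))) (u : ℕ) :
    ∑ i : Fin k, α i ^ u = if k ∣ u then (k : F) else 0 := by
  have hγN : (γ : Fˣ) ^ N = 1 := by rw [← hord, pow_orderOf_eq_one]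
  have hζord : orderOf ((γ : Fˣ) ^ (N / k)) = k := by
    have hNk0 : N / k ≠ 0 := (Nat.div_pos (Nat.le_of_dvd hN0 hkdvd) hk0).ne'
    rw [orderOf_pow' γ hNk0, hord, Nat.gcd_eq_right (Nat.div_dvd_of_dvd hkdvd),
      Nat.div_div_self hkdvd hN0.ne']
  set z : F := (γ : F) ^ (N / k * u) with hzdef
  have hterm : ∀ i : Fin k, α i ^ u = z ^ ((i : ℕ) + 1) := by
    intro i
    rw [hα i, hzdef, ← pow_mul, ← pow_mul]
    congr 1
    ring
  rw [Finset.sum_congr rfl fun i _ => hterm i]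
  by_cases hdu : k ∣ u
  · obtain ⟨v, rfl⟩ := hdu
    have hz1 : z = 1 := by
      rw [hzdef]
      have : N / k * (k * v) = N * v := by
        rw [← mul_assoc, Nat.div_mul_cancel hkdvd]
      rw [this, pow_mul]
      have : (γ : F) ^ N = 1 := by
        have := congrArg (Units.val) hγN
        simpa using this
      rw [this, one_pow]
    rw [if_pos ⟨v, rfl⟩, hz1]
    simp
  · have hz1 : z ≠ 1 := by
      intro h
      apply hdu
      have hzu : ((γ : Fˣ) ^ (N / k)) ^ u = 1 := by
        apply Units.ext
        push_cast
        rw [← pow_mul]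
        exact h
      have := orderOf_dvd_of_pow_eq_one hzu
      rwa [hζord] at this
    have hzk : z ^ k = 1 := by
      rw [hzdef, ← pow_mul]
      have : N / k * u * k = N * u := by
        rw [mul_comm (N / k * u) k, ← mul_assoc, Nat.mul_div_cancel' hkdvd]
      rw [this, pow_mul]
      have : (γ : F) ^ N = 1 := by
        have := congrArg (Units.val) hγN
        simpa using this
      rw [this, one_pow]
    rw [if_neg hdu]
    exact geom_fin z k hz1 hzk

/-- with `gcd(2k, q) = 1`, `(q-1)/k ∤ s - t`, `v₂(s-t) ≠ v₂(q-1) - v₂(k) - 1`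
and `β = (γ^s·α_1, …, γ^s·α_k, γ^t·α_1, …, γ^t·α_k)`, if `2ℓ < k`, or `k = 2ℓ` and
`k·(γ^{sk} + γ^{tk}) + Σ a_{1i}² ≠ 0`, then the GRL code is Euclidean LCD. -/
theorem stmt6 {F : Type} [Field F] [Fintype F]
    (p m : ℕ) (hp : p.Prime) (hodd : Odd p) (hm : 0 < m)
    (hcard : Fintype.card F = p ^ m)
    (γ : Fˣ) (hγ : ∀ x : Fˣ, x ∈ Subgroup.zpowers γ)
    (k ℓ : ℕ) (hℓ2 : 2 ≤ ℓ) (hℓk : ℓ ≤ k) (hkdvd : k ∣ Fintype.card F - 1)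
    (A : Matrix (Fin ℓ) (Fin ℓ) F) (hA : IsUnit A.det)
    (α : Fin k → F)
    (hα : ∀ i : Fin k, α i = (γ : F) ^ ((Fintype.card F - 1) / k * ((i : ℕ) + 1)))
    (s t : ℕ) (hs1 : 1 ≤ s) (hsq : s ≤ Fintype.card F - 1)
    (ht1 : 1 ≤ t) (htq : t ≤ Fintype.card F - 1) (hst : s ≠ t)
    (hgcd : Nat.gcd (2 * k) (Fintype.card F) = 1)
    (hdvd : ¬ ((((Fintype.card F - 1) / k : ℕ) : ℤ) ∣ ((s : ℤ) - (t : ℤ))))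
    (hv2 : (padicValNat 2 ((s : ℤ) - (t : ℤ)).natAbs : ℤ) ≠
      (padicValNat 2 (Fintype.card F - 1) : ℤ) - (padicValNat 2 k : ℤ) - 1)
    (β : (Fin k ⊕ Fin k) → F)
    (hβ : β = Sum.elim (fun i : Fin k => (γ : F) ^ s * α i)
      (fun i : Fin k => (γ : F) ^ t * α i))
    (hcase : 2 * ℓ < k ∨
      (k = 2 * ℓ ∧ (k : F) * ((γ : F) ^ (s * k) + (γ : F) ^ (t * k)) +
        ∑ i : Fin ℓ, A ⟨0, by omega⟩ i ^ 2 ≠ 0)) :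
    GRLcode k ℓ hℓk β A ⊓ dualE (GRLcode k ℓ hℓk β A) = ⊥ := by
  classical
  have hq3 : 3 ≤ Fintype.card F := by
    have hp3 : 3 ≤ p := by
      rcases hodd with ⟨j, hj⟩
      have := hp.two_le
      omega
    calc 3 ≤ p := hp3
      _ ≤ p ^ m := Nat.le_self_pow hm.ne' p
      _ = _ := hcard.symm
  have hk0 : 0 < k := by omega
  have h2ℓk : 2 * ℓ ≤ k := by rcases hcase with h | ⟨h, _⟩ <;> omega
  have hkℓpos : 0 < k - ℓ := by omega
  set N := Fintype.card F - 1 with hNdef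
  have hNk : k ≤ N := Nat.le_of_dvd (by omega) hkdvd
  have hord : orderOf γ = N := by
    rw [orderOf_eq_card_of_forall_mem_zpowers hγ, Nat.card_units, Nat.card_eq_fintype_card]
  have hNeven : 2 ∣ N := by
    have hop : Odd (p ^ m) := hodd.pow
    rcases hop with ⟨j, hj⟩
    rw [hNdef, hcard]
    omega
  obtain ⟨N', hN'⟩ := hNeven
  have hN'0 : 0 < N' := by omega
  -- characteristic facts
  have hcardF : ((Fintype.card F : ℕ) : F) = 0 := FiniteField.cast_card_eq_zero F
  have h2k0 : ((2 * k : ℕ) : F) ≠ 0 := by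
    intro h
    have h1 := (CharP.cast_eq_zero_iff F (ringChar F) _).mp h
    have h2 := (CharP.cast_eq_zero_iff F (ringChar F) _).mp hcardF
    have h3 : ringChar F ∣ 1 := hgcd ▸ Nat.dvd_gcd h1 h2
    exact CharP.char_ne_one F (ringChar F) (Nat.dvd_one.mp h3)
  have hkF : (k : F) ≠ 0 := by
    intro h
    apply h2k0
    push_cast
    rw [h, mul_zero]
  have h2F : (2 : F) ≠ 0 := by
    intro h
    apply h2k0
    push_cast
    rw [h, zero_mul]
  have hsumne : (γ : F) ^ (s * k) + (γ : F) ^ (t * k) ≠ 0 := by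
    intro h
    exact hv2 (key_v2 γ N N' k s t hord hN' hN'0 hk0 hst h)
  set cF : F := (k : F) * ((γ : F) ^ (s * k) + (γ : F) ^ (t * k)) with hcFdef
  have hcF : cF ≠ 0 := mul_ne_zero hkF hsumne
  have hαsum : ∀ u : ℕ, ∑ i : Fin k, α i ^ u = if k ∣ u then (k : F) else 0 :=
    alphasum γ N k hord hk0 (by omega) hkdvd α hα
  -- reduce to Gram matrix criterion
  show Submodule.span F (Set.range (GRLmatrix k ℓ hℓk β A)) ⊓
    dualE (Submodule.span F (Set.range (GRLmatrix k ℓ hℓk β A))) = ⊥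
  apply gram_crit
  intro c H
  set G := GRLmatrix k ℓ hℓk β A with hGdef
  -- Gram matrix entries
  have hM : ∀ r r' : Fin k, (∑ j, G r j * G r' j) =
      ((γ : F) ^ (s * ((r : ℕ) + (r' : ℕ))) + (γ : F) ^ (t * ((r : ℕ) + (r' : ℕ)))) *
        (if k ∣ (r : ℕ) + (r' : ℕ) then (k : F) else 0) +
      ∑ j' : Fin ℓ, G r (Sum.inr j') * G r' (Sum.inr j') := by
    intro r r'
    rw [Fintype.sum_sum_type, Fintype.sum_sum_type]
    congr 1
    have hfac : ∀ (w : ℕ) (i : Fin k),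
        ((γ : F) ^ w * α i) ^ (r : ℕ) * (((γ : F) ^ w * α i) ^ (r' : ℕ)) =
          (γ : F) ^ (w * ((r : ℕ) + (r' : ℕ))) * α i ^ ((r : ℕ) + (r' : ℕ)) := by
      intro w i
      rw [← pow_add, mul_pow, ← pow_mul]
    simp only [hGdef, GRLmatrix, Sum.elim_inl, hβ]
    simp only [Sum.elim_inl, Sum.elim_inr]
    rw [Finset.sum_congr rfl fun i _ => hfac s i, Finset.sum_congr rfl fun i _ => hfac t i,
      ← Finset.mul_sum, ← Finset.mul_sum, hαsum, add_mul]
  -- extra-column helpers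
  have hrowzero : ∀ (r x : Fin k), (r : ℕ) < k - ℓ →
      ∑ j' : Fin ℓ, G r (Sum.inr j') * G x (Sum.inr j') = 0 := by
    intro r x hr
    apply Finset.sum_eq_zero
    intro j' _
    have hz : G r (Sum.inr j') = 0 := by
      simp only [hGdef, GRLmatrix, Sum.elim_inr]
      rw [dif_pos hr]
    rw [hz, zero_mul]
  have hcolzero : ∀ (r x : Fin k), (x : ℕ) < k - ℓ →
      ∑ j' : Fin ℓ, G r (Sum.inr j') * G x (Sum.inr j') = 0 := by
    intro r x hx
    apply Finset.sum_eq_zero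
    intro j' _
    have hz : G x (Sum.inr j') = 0 := by
      simp only [hGdef, GRLmatrix, Sum.elim_inr]
      rw [dif_pos hx]
    rw [hz, mul_zero]
  -- column equations
  have keysplit : ∀ r' : Fin k,
      (∑ r : Fin k, c r * (((γ : F) ^ (s * ((r : ℕ) + (r' : ℕ))) +
          (γ : F) ^ (t * ((r : ℕ) + (r' : ℕ)))) *
          (if k ∣ (r : ℕ) + (r' : ℕ) then (k : F) else 0))) +
        ∑ r : Fin k, c r * (∑ j' : Fin ℓ, G r (Sum.inr j') * G r' (Sum.inr j')) = 0 := by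
    intro r'
    have hsp : ∑ r : Fin k, c r * (∑ j, G r j * G r' j) =
        (∑ r : Fin k, c r * (((γ : F) ^ (s * ((r : ℕ) + (r' : ℕ))) +
          (γ : F) ^ (t * ((r : ℕ) + (r' : ℕ)))) *
          (if k ∣ (r : ℕ) + (r' : ℕ) then (k : F) else 0))) +
        ∑ r : Fin k, c r * (∑ j' : Fin ℓ, G r (Sum.inr j') * G r' (Sum.inr j')) := by
      rw [← Finset.sum_add_distrib]
      apply Finset.sum_congr rfl
      intro r _
      rw [hM r r', mul_add]
    rw [← hsp]
    exact H r'
  have key0 : c ⟨0, hk0⟩ * ((1 + 1) * (k : F)) +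
      ∑ r : Fin k, c r * (∑ j' : Fin ℓ, G r (Sum.inr j') * G ⟨0, hk0⟩ (Sum.inr j')) = 0 := by
    have h := keysplit ⟨0, hk0⟩
    rw [← h]
    congr 1
    rw [Finset.sum_eq_single_of_mem (⟨0, hk0⟩ : Fin k) (Finset.mem_univ _)]
    · norm_num
    · intro b _ hb
      have hb0 : 0 < (b : ℕ) := by
        rcases Nat.eq_zero_or_pos (b : ℕ) with h | h
        · exact absurd (Fin.ext h) hb
        · exact h
      have hnd : ¬ k ∣ (b : ℕ) + (0 : ℕ) := by
        rintro ⟨v, hv⟩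
        have hblt := b.isLt
        have hcases : v = 0 ∨ v = 1 ∨ 2 ≤ v := by omega
        rcases hcases with rfl | rfl | hge
        · omega
        · omega
        · have := Nat.mul_le_mul_left k hge
          omega
      simp only [Fin.val_mk] at hnd ⊢
      rw [if_neg hnd, mul_zero, mul_zero]
  have key : ∀ r0 r' : Fin k, (r0 : ℕ) + (r' : ℕ) = k →
      c r0 * cF +
      ∑ r : Fin k, c r * (∑ j' : Fin ℓ, G r (Sum.inr j') * G r' (Sum.inr j')) = 0 := by
    intro r0 r' hsum0
    have h := keysplit r'
    rw [← h]
    congr 1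
    rw [Finset.sum_eq_single_of_mem r0 (Finset.mem_univ _)]
    · rw [hsum0, if_pos dvd_rfl, hcFdef]
      ring
    · intro b _ hb
      have hblt := b.isLt
      have hr'lt := r'.isLt
      have hr0lt := r0.isLt
      have hbne : (b : ℕ) ≠ (r0 : ℕ) := fun h => hb (Fin.ext h)
      have hnd : ¬ k ∣ (b : ℕ) + (r' : ℕ) := by
        rintro ⟨v, hv⟩
        have hcases : v = 0 ∨ v = 1 ∨ 2 ≤ v := by omega
        rcases hcases with rfl | rfl | hge
        · omega
        · omega
        · have := Nat.mul_le_mul_left k hge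
          omega
      rw [if_neg hnd, mul_zero, mul_zero]
  -- Step 1: c 0 = 0
  have hc0 : c ⟨0, hk0⟩ = 0 := by
    have h := key0
    have hz : ∑ r : Fin k, c r * (∑ j' : Fin ℓ, G r (Sum.inr j') * G ⟨0, hk0⟩ (Sum.inr j')) = 0 := by
      apply Finset.sum_eq_zero
      intro r _
      rw [hcolzero r ⟨0, hk0⟩ (by simp [hkℓpos]), mul_zero]
    rw [hz, add_zero] at h
    rcases mul_eq_zero.mp h with h | h
    · exact h
    · exact absurd h (by
        have : (1 + 1 : F) = 2 := by norm_num
        rw [this]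
        exact mul_ne_zero h2F hkF)
  -- Step 2: c r = 0 for r ≥ ℓ + 1
  have hhigh : ∀ r : Fin k, ℓ + 1 ≤ (r : ℕ) → c r = 0 := by
    intro r hr
    have hrlt := r.isLt
    have h := key r ⟨k - (r : ℕ), by omega⟩ (by simp only [Fin.val_mk]; omega)
    have hz : ∑ x : Fin k, c x *
        (∑ j' : Fin ℓ, G x (Sum.inr j') * G ⟨k - (r : ℕ), by omega⟩ (Sum.inr j')) = 0 := by
      apply Finset.sum_eq_zero
      intro x _
      rw [hcolzero x ⟨k - (r : ℕ), by omega⟩ (by simp only [Fin.val_mk]; omega), mul_zero]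
    rw [hz, add_zero] at h
    rcases mul_eq_zero.mp h with h | h
    · exact h
    · exact absurd h hcF
  -- Step 3: c r = 0 for r ≥ k - ℓ
  have hmid : ∀ r : Fin k, k - ℓ ≤ (r : ℕ) → c r = 0 := by
    rcases hcase with hlt | ⟨heq, hne⟩
    · intro r hr
      exact hhigh r (by omega)
    · have hcl : c ⟨ℓ, by omega⟩ = 0 := by
        have h := key ⟨ℓ, by omega⟩ ⟨ℓ, by omega⟩ (by simp only [Fin.val_mk]; omega)
        have hz : ∑ r : Fin k, c r *
            (∑ j' : Fin ℓ, G r (Sum.inr j') * G ⟨ℓ, by omega⟩ (Sum.inr j')) =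
            c ⟨ℓ, by omega⟩ * ∑ i : Fin ℓ, A ⟨0, by omega⟩ i ^ 2 := by
          rw [Finset.sum_eq_single_of_mem (⟨ℓ, by omega⟩ : Fin k) (Finset.mem_univ _)]
          · congr 1
            apply Finset.sum_congr rfl
            intro j' _
            have hGe : G ⟨ℓ, by omega⟩ (Sum.inr j') = A ⟨0, by omega⟩ j' := by
              simp only [hGdef, GRLmatrix, Sum.elim_inr]
              rw [dif_neg (by omega)]
              congr 1
              apply Fin.ext
              simp
              omega
            rw [hGe]
            ring
          · intro b _ hb
            rcases Nat.lt_or_ge (b : ℕ) (k - ℓ) with hblt | hbge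
            · rw [hrowzero b ⟨ℓ, by omega⟩ hblt, mul_zero]
            · have hbℓ : ℓ + 1 ≤ (b : ℕ) := by
                have : (b : ℕ) ≠ ℓ := fun hh => hb (Fin.ext (by simp [hh]))
                omega
              rw [hhigh b hbℓ, zero_mul]
        rw [hz, ← mul_add] at h
        rcases mul_eq_zero.mp h with h | h
        · exact h
        · exact absurd h (by rw [hcFdef] at *; exact hne)
      intro r hr
      rcases Nat.eq_or_lt_of_le hr with heq2 | hlt2
      · have : r = ⟨ℓ, by omega⟩ := by
          apply Fin.ext
          simp
          omega
        rw [this]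
        exact hcl
      · exact hhigh r (by omega)
  -- Step 4: c r = 0 for 1 ≤ r ≤ ℓ
  have hlow : ∀ r : Fin k, 1 ≤ (r : ℕ) → (r : ℕ) ≤ ℓ → c r = 0 := by
    intro r h1 h2
    have h := key r ⟨k - (r : ℕ), by omega⟩ (by simp only [Fin.val_mk]; omega)
    have hz : ∑ x : Fin k, c x *
        (∑ j' : Fin ℓ, G x (Sum.inr j') * G ⟨k - (r : ℕ), by omega⟩ (Sum.inr j')) = 0 := by
      apply Finset.sum_eq_zero
      intro x _
      rcases Nat.lt_or_ge (x : ℕ) (k - ℓ) with hxlt | hxge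
      · rw [hrowzero x _ hxlt, mul_zero]
      · rw [hmid x hxge, zero_mul]
    rw [hz, add_zero] at h
    rcases mul_eq_zero.mp h with h | h
    · exact h
    · exact absurd h hcF
  -- conclude
  funext r
  show c r = 0
  rcases Nat.eq_zero_or_pos (r : ℕ) with h0 | h1
  · have : r = ⟨0, hk0⟩ := Fin.ext (by simp [h0])
    rw [this]
    exact hc0
  · rcases Nat.lt_or_ge (r : ℕ) (ℓ + 1) with h2 | h2
    · exact hlow r h1 (by omega)
    · exact hhigh r h2
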